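/- Let Δ be a base of Φ and Θ ⊆ Δ. Within the ℚ-span of Φ̌ one has the direct sum decomposition (ℚ-span of Φ̌) = (ℚ-span of {α̌ : α ∈ Θ}) ⊕ {v ∈ ℚ-span of Φ̌ : ⟨α, v⟩ = 0 for all α ∈ Θ}; write π for the projection onto the first summand along the second. Then for every root β ∈ Φ, the element |W| · π(β̌) lies in the ℤ-span of {α̌ : α ∈ Θ}. (Equivalently, the component of β̌ in the span of the coroots of the subsystem Φ_Θ = Φ ∩ ℤΘ equals Σ_{α∈Θ} ⟨β, α̌⟩·ω̌⁰_α, an integral combination of the fundamental coweights of Φ_Θ, and hence lies in ℤ[1/|W|]·{α̌ : α ∈ Θ}.) -/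

import Mathlib

open Function Set

section Aux

variable {V V' : Type*} [AddCommGroup V] [Module ℚ V] [AddCommGroup V'] [Module ℚ V']

/-- Orbit lemma: a "transvection-like" map preserving a finite set must be trivial on it. -/
lemma orbit_aux (Φ : Set V) (hfin : Φ.Finite) (d : V) (φ : V →ₗ[ℚ] ℚ) (hd : φ d = 0)
    (hu : ∀ β ∈ Φ, β + φ β • d ∈ Φ) : ∀ β ∈ Φ, φ β • d = 0 := by
  intro β hβ
  by_contra hne
  have key : ∀ n : ℕ, β + (n : ℚ) • (φ β • d) ∈ Φ := by
    intro n
    induction n with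
    | zero => simpa using hβ
    | succ n ih =>
      have h2 := hu _ ih
      have hφ : φ (β + (n : ℚ) • (φ β • d)) = φ β := by
        simp [map_add, map_smul, hd]
      rw [hφ] at h2
      have : β + (n : ℚ) • (φ β • d) + φ β • d = β + ((n : ℕ) + 1 : ℚ) • (φ β • d) := by
        rw [add_smul, one_smul, add_assoc]
      rw [this] at h2
      convert h2 using 3
      push_cast
      ring
  have hinj : Function.Injective (fun n : ℕ => β + (n : ℚ) • (φ β • d)) := by
    intro m n h
    simp only [add_right_inj] at h
    have : ((m : ℚ) - (n : ℚ)) • (φ β • d) = 0 := by rw [sub_smul, h, sub_self]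
    rcases smul_eq_zero.mp this with h' | h'
    · exact Nat.cast_injective (sub_eq_zero.mp h')
    · exact absurd h' hne
  exact hfin.not_infinite (Set.infinite_of_injective_forall_mem hinj key)

variable (P : V →ₗ[ℚ] V' →ₗ[ℚ] ℚ) (Φ : Set V) (coroot : V → V') (s : V → (V ≃ₗ[ℚ] V))

lemma s_invol (h2 : ∀ α ∈ Φ, P α (coroot α) = 2)
    (hs_def : ∀ α ∈ Φ, ∀ v : V, s α v = v - (P v (coroot α)) • α)
    {α : V} (hα : α ∈ Φ) (v : V) : s α (s α v) = v := by
  rw [hs_def α hα v, hs_def α hα, map_sub, map_smul, LinearMap.sub_apply,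
    LinearMap.smul_apply, h2 α hα]
  simp only [smul_eq_mul, sub_smul, mul_smul]
  module

end Aux

section Aux2

variable {V V' : Type*} [AddCommGroup V] [Module ℚ V] [AddCommGroup V'] [Module ℚ V']
variable (P : V →ₗ[ℚ] V' →ₗ[ℚ] ℚ) (Φ : Set V) (coroot : V → V') (s : V → (V ≃ₗ[ℚ] V))
variable (hfin : Φ.Finite)
    (h2 : ∀ α ∈ Φ, P α (coroot α) = 2)
    (hs_def : ∀ α ∈ Φ, ∀ v : V, s α v = v - (P v (coroot α)) • α)
    (hs_perm : ∀ α ∈ Φ, ∀ β ∈ Φ, s α β ∈ Φ)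

include hfin h2 hs_def hs_perm

lemma coroot_equivariant {α γ : V} (hα : α ∈ Φ) (hγ : γ ∈ Φ) {v : V}
    (hv : v ∈ Submodule.span ℚ Φ) :
    P v (coroot (s α γ)) = P (s α v) (coroot γ) := by
  set δ := s α γ with hδdef
  have hδ : δ ∈ Φ := hs_perm α hα γ hγ
  have hδ0 : δ ≠ 0 := by
    intro h
    have h22 := h2 δ hδ
    rw [h, map_zero P, LinearMap.zero_apply] at h22
    exact absurd h22 (by norm_num)
  set φ : V →ₗ[ℚ] ℚ :=
    (P.flip (coroot γ)).comp (s α : V →ₗ[ℚ] V) - P.flip (coroot δ) with hφdef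
  have hφ_apply : ∀ w : V, φ w = P (s α w) (coroot γ) - P w (coroot δ) := by
    intro w; simp [hφdef]
  have hsαδ : s α δ = γ := by rw [hδdef]; exact s_invol P Φ coroot s h2 hs_def hα γ
  have hφδ : φ δ = 0 := by
    rw [hφ_apply, hsαδ, h2 γ hγ, h2 δ hδ, sub_self]
  have hu : ∀ β ∈ Φ, β + φ β • δ ∈ Φ := by
    intro β hβ
    have hmem : s δ (s α (s γ (s α β))) ∈ Φ :=
      hs_perm δ hδ _ (hs_perm α hα _ (hs_perm γ hγ _ (hs_perm α hα β hβ)))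
    have heq : s δ (s α (s γ (s α β))) = β + φ β • δ := by
      have e1 : s γ (s α β) = s α β - (P (s α β) (coroot γ)) • γ :=
        hs_def γ hγ (s α β)
      have e2 : s α (s γ (s α β)) = β - (P (s α β) (coroot γ)) • δ := by
        rw [e1, map_sub, map_smul, s_invol P Φ coroot s h2 hs_def hα β, hδdef]
      rw [e2, hs_def δ hδ, map_sub, map_smul, LinearMap.sub_apply, LinearMap.smul_apply,
        h2 δ hδ, hφ_apply]
      simp only [smul_eq_mul, sub_smul, mul_smul]
      module
    rw [← heq]; exact hmem
  have horb := orbit_aux Φ hfin δ φ hφδ hu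
  have hker : ∀ β ∈ Φ, φ β = 0 := by
    intro β hβ
    rcases smul_eq_zero.mp (horb β hβ) with h | h
    · exact h
    · exact absurd h hδ0
  have hspan : Submodule.span ℚ Φ ≤ LinearMap.ker φ := by
    rw [Submodule.span_le]
    intro x hx
    exact LinearMap.mem_ker.mpr (hker x hx)
  have := hspan hv
  rw [LinearMap.mem_ker, hφ_apply] at this
  linarith [this]

lemma coroot_faithful {γ₁ γ₂ : V} (h₁ : γ₁ ∈ Φ) (h₂ : γ₂ ∈ Φ)
    (h : ∀ v ∈ Submodule.span ℚ Φ, P v (coroot γ₁) = P v (coroot γ₂)) :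
    γ₁ = γ₂ := by
  set φ : V →ₗ[ℚ] ℚ := P.flip (coroot γ₁) with hφdef
  have hφ_apply : ∀ w : V, φ w = P w (coroot γ₁) := fun w => rfl
  set d : V := γ₂ - γ₁ with hddef
  have hφd : φ d = 0 := by
    rw [hφ_apply, hddef, map_sub, LinearMap.sub_apply,
      h γ₂ (Submodule.subset_span h₂), h2 γ₂ h₂, h2 γ₁ h₁, sub_self]
  have hu : ∀ β ∈ Φ, β + φ β • d ∈ Φ := by
    intro β hβ
    have hmem : s γ₂ (s γ₁ β) ∈ Φ := hs_perm γ₂ h₂ _ (hs_perm γ₁ h₁ β hβ)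
    have heq : s γ₂ (s γ₁ β) = β + φ β • d := by
      rw [hs_def γ₁ h₁ β, hs_def γ₂ h₂, map_sub, map_smul, LinearMap.sub_apply,
        LinearMap.smul_apply, ← h β (Submodule.subset_span hβ),
        ← h γ₁ (Submodule.subset_span h₁), h2 γ₁ h₁, hφ_apply, hddef]
      simp only [smul_eq_mul, sub_smul, mul_smul]
      module
    rw [← heq]; exact hmem
  have horb := orbit_aux Φ hfin d φ hφd hu γ₁ h₁
  rw [hφ_apply, h2 γ₁ h₁] at horb
  rcases smul_eq_zero.mp horb with h' | h'
  · norm_num at h'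
  · rw [hddef, sub_eq_zero] at h'
    exact h'.symm

end Aux2

open Function Set Module Submodule

section Master

variable {V V' : Type*} [AddCommGroup V] [Module ℚ V] [AddCommGroup V'] [Module ℚ V']
  [FiniteDimensional ℚ V] [FiniteDimensional ℚ V']
variable (P : V →ₗ[ℚ] V' →ₗ[ℚ] ℚ) (Φ : Set V) (coroot : V → V') (s : V → (V ≃ₗ[ℚ] V))

/-- The genuine (junk-free) root pairing on the span of the roots. -/
noncomputable def RP (hfin : Φ.Finite)
    (h2 : ∀ α ∈ Φ, P α (coroot α) = 2)
    (hs_def : ∀ α ∈ Φ, ∀ v : V, s α v = v - (P v (coroot α)) • α)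
    (hs_perm : ∀ α ∈ Φ, ∀ β ∈ Φ, s α β ∈ Φ) :
    RootPairing ↥Φ ℚ ↥(Submodule.span ℚ Φ) (Module.Dual ℚ ↥(Submodule.span ℚ Φ)) where
  toLinearMap := Module.Dual.eval ℚ ↥(Submodule.span ℚ Φ)
  root := ⟨fun γ => (⟨γ.1, Submodule.subset_span γ.2⟩ : ↥(Submodule.span ℚ Φ)), by
    intro a b h
    rw [Subtype.mk.injEq] at h
    exact Subtype.ext h⟩
  coroot := ⟨fun γ => (P.flip (coroot γ.1)).comp (Submodule.span ℚ Φ).subtype, by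
    intro a b h
    refine Subtype.ext (coroot_faithful P Φ coroot s hfin h2 hs_def hs_perm a.2 b.2 ?_)
    intro v hv
    exact congrArg (fun f : Module.Dual ℚ ↥(Submodule.span ℚ Φ) => f ⟨v, hv⟩) h⟩
  root_coroot_two := fun i => h2 i.1 i.2
  reflectionPerm := fun i => Function.Involutive.toPerm
    (fun j => ⟨s i.1 j.1, hs_perm i.1 i.2 j.1 j.2⟩)
    (fun j => Subtype.ext (s_invol P Φ coroot s h2 hs_def i.2 j.1))
  reflectionPerm_root := by
    intro i j
    apply Subtype.ext
    show j.1 - (P j.1 (coroot i.1)) • i.1 = s i.1 j.1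
    rw [hs_def i.1 i.2 j.1]
  reflectionPerm_coroot := by
    intro i j
    apply LinearMap.ext
    intro x
    show P x.1 (coroot j.1) - (P i.1 (coroot j.1)) * P x.1 (coroot i.1)
      = P x.1 (coroot (s i.1 j.1))
    rw [coroot_equivariant P Φ coroot s hfin h2 hs_def hs_perm i.2 j.2 x.2,
      hs_def i.1 i.2 x.1, map_sub, map_smul, LinearMap.sub_apply, LinearMap.smul_apply,
      smul_eq_mul]
    ring

variable (hfin : Φ.Finite)
    (h2 : ∀ α ∈ Φ, P α (coroot α) = 2)
    (hs_def : ∀ α ∈ Φ, ∀ v : V, s α v = v - (P v (coroot α)) • α)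
    (hs_perm : ∀ α ∈ Φ, ∀ β ∈ Φ, s α β ∈ Φ)

lemma RP_root (γ : ↥Φ) :
    (((RP P Φ coroot s hfin h2 hs_def hs_perm).root γ : ↥(Submodule.span ℚ Φ)) : V) = γ.1 :=
  rfl

lemma RP_coroot' (γ : ↥Φ) (x : ↥(Submodule.span ℚ Φ)) :
    (RP P Φ coroot s hfin h2 hs_def hs_perm).coroot' γ x = P x.1 (coroot γ.1) :=
  rfl

lemma RP_coroot_apply (γ : ↥Φ) (x : ↥(Submodule.span ℚ Φ)) :
    (RP P Φ coroot s hfin h2 hs_def hs_perm).coroot γ x = P x.1 (coroot γ.1) :=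
  rfl


/-- Generic identity: `⟨x, α̌ᵢ⟩ · (αᵢ,αᵢ) = 2 (αᵢ, x)` for the canonical bilinear form. -/
lemma rootForm_pairing_identity {ι M N : Type*} [Fintype ι] [AddCommGroup M] [Module ℚ M]
    [AddCommGroup N] [Module ℚ N] (Q : RootPairing ι ℚ M N) (i : ι) (x : M) :
    Q.RootForm (Q.root i) (Q.root i) * Q.coroot' i x = 2 * Q.RootForm (Q.root i) x := by
  have h := congrArg (fun f : N => Q.toLinearMap x f) (Q.rootForm_self_smul_coroot i)
  simp only [map_nsmul, map_sum, map_smul, smul_eq_mul, nsmul_eq_mul, Nat.cast_ofNat,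
    RootPairing.Polarization_apply, RootPairing.rootForm_apply_apply] at h ⊢
  exact h

include hfin h2 hs_def hs_perm in
lemma cartan_injective (Θ : Set V) (hΘΦ : Θ ⊆ Φ)
    (hΘind : LinearIndependent ℚ ((↑) : Θ → V)) [Fintype ↥Θ] (c : ↥Θ → ℚ)
    (hc : ∀ b : ↥Θ, ∑ a : ↥Θ, c a * P b.1 (coroot a.1) = 0) :
    ∀ a, c a = 0 := by
  haveI : Fintype ↥Φ := hfin.fintype
  set Q := RP P Φ coroot s hfin h2 hs_def hs_perm with hQ
  set ii : ↥Θ → ↥Φ := fun a => (⟨a.1, hΘΦ a.2⟩ : ↥Φ) with hii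
  set q : ↥Θ → ℚ := fun a => Q.RootForm (Q.root (ii a)) (Q.root (ii a)) with hq
  have hqpos : ∀ a, 0 < q a := fun a =>
    lt_of_le_of_ne (Q.zero_le_rootForm _) (RootPairing.IsAnisotropic.rootForm_root_ne_zero (P := Q) (ii a)).symm
  set z : ↥(Submodule.span ℚ Φ) := ∑ a : ↥Θ, (c a / q a) • Q.root (ii a) with hz
  have hterm : ∀ b a : ↥Θ, Q.RootForm (Q.root (ii b)) ((c a / q a) • Q.root (ii a))
      = c a * P b.1 (coroot a.1) / 2 := by
    intro b a
    rw [map_smul, smul_eq_mul]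
    have hsymm : Q.RootForm (Q.root (ii b)) (Q.root (ii a))
        = Q.RootForm (Q.root (ii a)) (Q.root (ii b)) := by
      simpa using Q.rootForm_symmetric.eq (Q.root (ii b)) (Q.root (ii a))
    have hkey := rootForm_pairing_identity Q (ii a) (Q.root (ii b))
    have hco : Q.coroot' (ii a) (Q.root (ii b)) = P b.1 (coroot a.1) := by
      rw [hQ]; rfl
    rw [hco] at hkey
    rw [hsymm]
    have hqa := (hqpos a).ne'
    have hq' : q a = Q.RootForm (Q.root (ii a)) (Q.root (ii a)) := rfl
    rw [← hq'] at hkey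
    have hRF : Q.RootForm (Q.root (ii a)) (Q.root (ii b))
        = q a * P b.1 (coroot a.1) / 2 := by linarith
    rw [hRF]
    field_simp
  have hbz : ∀ b : ↥Θ, Q.RootForm (Q.root (ii b)) z = 0 := by
    intro b
    rw [hz, map_sum, Finset.sum_congr rfl (fun a _ => hterm b a), ← Finset.sum_div]
    rw [hc b]
    simp
  have hzz : Q.RootForm z z = 0 := by
    nth_rewrite 2 [hz]
    rw [map_sum]
    refine Finset.sum_eq_zero fun a _ => ?_
    rw [map_smul, smul_eq_mul]
    have hsymm : Q.RootForm z (Q.root (ii a)) = Q.RootForm (Q.root (ii a)) z := by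
      simpa using Q.rootForm_symmetric.eq z (Q.root (ii a))
    rw [hsymm, hbz a, mul_zero]
  have hzmem : z ∈ Q.rootSpan ℚ :=
    Submodule.sum_mem _ fun a _ =>
      Submodule.smul_mem _ _ (Submodule.subset_span (Set.mem_range_self _))
  have hz0 : z = 0 := Q.eq_zero_of_mem_rootSpan_of_rootForm_self_eq_zero hzmem hzz
  have hv : ∑ a : ↥Θ, (c a / q a) • (a.1 : V) = 0 := by
    have h := congrArg ((Submodule.span ℚ Φ).subtype) hz0
    rw [hz] at h
    simp only [map_sum, map_smul, map_zero, Submodule.subtype_apply] at h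
    exact h
  have hcoef := Fintype.linearIndependent_iff.mp hΘind (fun a => c a / q a) hv
  intro a
  rcases div_eq_zero_iff.mp (hcoef a) with h | h
  · exact h
  · exact absurd h (hqpos a).ne'

end Master

section MainThm

/-- Let `Φ` be a finite, reduced, crystallographic root system with Weyl group
`W = ⟨s α : α ∈ Φ⟩`, let `Δ` be a base of `Φ` and `Θ ⊆ Δ`.  Within the `ℚ`-span of the coroots
`Φ̌` one has the direct sum decomposition `ℚΦ̌ = ℚΘ̌ ⊕ K`, where
`K = {v ∈ ℚΦ̌ : ⟨α, v⟩ = 0 for all α ∈ Θ}`.  Moreover, for every root `β ∈ Φ`, the component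
`u` of `β̌` in `ℚΘ̌` (along `K`) satisfies `|W| • u ∈ ℤΘ̌`. -/
theorem weyl_order_smul_projection_of_coroot_mem_span
    {V V' : Type*} [AddCommGroup V] [Module ℚ V] [AddCommGroup V'] [Module ℚ V']
    [FiniteDimensional ℚ V] [FiniteDimensional ℚ V']
    (P : V →ₗ[ℚ] V' →ₗ[ℚ] ℚ) [P.IsPerfPair]
    (Φ : Set V) (hfin : Φ.Finite) (coroot : V → V')
    (h2 : ∀ α ∈ Φ, P α (coroot α) = 2)
    (hcrys : ∀ α ∈ Φ, ∀ β ∈ Φ, ∃ n : ℤ, P β (coroot α) = (n : ℚ))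
    (hred : ∀ α ∈ Φ, ∀ c : ℚ, c • α ∈ Φ → c = 1 ∨ c = -1)
    (s : V → (V ≃ₗ[ℚ] V))
    (hs_def : ∀ α ∈ Φ, ∀ v : V, s α v = v - (P v (coroot α)) • α)
    (hs_perm : ∀ α ∈ Φ, ∀ β ∈ Φ, s α β ∈ Φ)
    (Δ : Set V) (hΔΦ : Δ ⊆ Φ)
    (hΔind : LinearIndependent ℚ ((↑) : Δ → V))
    (hΔbase : ∀ β ∈ Φ, ∃ c : V →₀ ℤ, ↑c.support ⊆ Δ ∧
        β = c.sum (fun α n => (n : ℚ) • α) ∧ ((∀ α, 0 ≤ c α) ∨ (∀ α, c α ≤ 0)))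
    (Θ : Set V) (hΘ : Θ ⊆ Δ) :
    Submodule.span ℚ (coroot '' Θ) ⊓
        (Submodule.span ℚ (coroot '' Φ) ⊓ ⨅ α ∈ Θ, LinearMap.ker (P α)) = ⊥ ∧
    Submodule.span ℚ (coroot '' Φ) =
        Submodule.span ℚ (coroot '' Θ) ⊔
        (Submodule.span ℚ (coroot '' Φ) ⊓ ⨅ α ∈ Θ, LinearMap.ker (P α)) ∧
    ∀ β ∈ Φ, ∀ u w : V', u ∈ Submodule.span ℚ (coroot '' Θ) →
        w ∈ Submodule.span ℚ (coroot '' Φ) ⊓ ⨅ α ∈ Θ, LinearMap.ker (P α) →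
        coroot β = u + w →
        (Nat.card ↥(Subgroup.closure (s '' Φ)) : ℤ) • u ∈ Submodule.span ℤ (coroot '' Θ) := by
  classical
  have hΘΦ : Θ ⊆ Φ := fun a ha => hΔΦ (hΘ ha)
  have hΘfin : Θ.Finite := hfin.subset hΘΦ
  haveI : Fintype ↥Θ := hΘfin.fintype
  have hΘind : LinearIndependent ℚ ((↑) : Θ → V) := LinearIndepOn.mono (R := ℚ) (v := id) hΔind hΘ
  -- the crucial consequence of nondegeneracy of the Cartan matrix of `Θ`
  have hL2 : ∀ x ∈ Submodule.span ℚ (coroot '' Θ), (∀ a ∈ Θ, P a x = 0) → x = 0 := by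
    intro x hx hker
    rw [Set.image_eq_range coroot Θ] at hx
    obtain ⟨c, hc⟩ := (mem_span_range_iff_exists_fun ℚ).mp hx
    have h0 : ∀ b : ↥Θ, ∑ a : ↥Θ, c a * P b.1 (coroot a.1) = 0 := by
      intro b
      have hb := hker b.1 b.2
      rw [← hc, map_sum] at hb
      simpa [map_smul, smul_eq_mul] using hb
    have hc0 := cartan_injective P Φ coroot s hfin h2 hs_def hs_perm Θ hΘΦ hΘind c h0
    rw [← hc]
    simp [hc0]
  -- surjectivity of the Cartan matrix of `Θ`
  have hmv : ∀ t : ↥Θ → ℚ, ∃ cc : ↥Θ → ℚ,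
      ∀ b : ↥Θ, ∑ a : ↥Θ, cc a * P b.1 (coroot a.1) = t b := by
    set A : Matrix ↥Θ ↥Θ ℚ := Matrix.of (fun b a => P b.1 (coroot a.1)) with hA
    have hinj : Function.Injective A.mulVecLin := by
      rw [← LinearMap.ker_eq_bot]
      refine (Submodule.eq_bot_iff _).mpr fun cc hcc => ?_
      rw [LinearMap.mem_ker] at hcc
      have h0 : ∀ b : ↥Θ, ∑ a : ↥Θ, cc a * P b.1 (coroot a.1) = 0 := by
        intro b
        have := congrFun hcc b
        simpa [Matrix.mulVecLin_apply, Matrix.mulVec, dotProduct, hA, mul_comm]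
          using this
      funext a
      exact cartan_injective P Φ coroot s hfin h2 hs_def hs_perm Θ hΘΦ hΘind cc h0 a
    have hsurj := LinearMap.surjective_of_injective hinj
    intro t
    obtain ⟨cc, hcc⟩ := hsurj t
    refine ⟨cc, fun b => ?_⟩
    have := congrFun hcc b
    simpa [Matrix.mulVecLin_apply, Matrix.mulVec, dotProduct, hA, mul_comm]
      using this
  -- decomposition
  have hdecomp : ∀ y ∈ Submodule.span ℚ (coroot '' Φ), ∃ u₀ ∈ Submodule.span ℚ (coroot '' Θ),
      y - u₀ ∈ Submodule.span ℚ (coroot '' Φ) ⊓ ⨅ α ∈ Θ, LinearMap.ker (P α) := by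
    intro y hy
    obtain ⟨cc, hcc⟩ := hmv (fun b => P b.1 y)
    refine ⟨∑ a : ↥Θ, cc a • coroot a.1, Submodule.sum_mem _ fun a _ =>
      Submodule.smul_mem _ _ (Submodule.subset_span ⟨a.1, a.2, rfl⟩),
      Submodule.mem_inf.mpr ⟨?_, ?_⟩⟩
    · refine Submodule.sub_mem _ hy (Submodule.sum_mem _ fun a _ =>
        Submodule.smul_mem _ _ (Submodule.subset_span ⟨a.1, hΘΦ a.2, rfl⟩))
    · rw [Submodule.mem_iInf]
      intro α
      rw [Submodule.mem_iInf]
      intro hα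
      rw [LinearMap.mem_ker, map_sub, map_sum, sub_eq_zero]
      rw [← hcc ⟨α, hα⟩]
      refine Finset.sum_congr rfl fun a _ => ?_
      rw [map_smul, smul_eq_mul]
  refine ⟨?_, ?_, ?_⟩
  · -- intersection trivial
    refine (Submodule.eq_bot_iff _).mpr fun x hx => ?_
    obtain ⟨hx1, hx2⟩ := Submodule.mem_inf.mp hx
    obtain ⟨hx2a, hx3⟩ := Submodule.mem_inf.mp hx2
    refine hL2 x hx1 fun a ha => ?_
    have := (Submodule.mem_iInf _).mp ((Submodule.mem_iInf _).mp hx3 a) ha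
    exact LinearMap.mem_ker.mp this
  · -- sum
    refine le_antisymm (fun y hy => ?_) (sup_le (Submodule.span_mono
      (Set.image_mono hΘΦ)) inf_le_left)
    obtain ⟨u₀, hu₀, hw⟩ := hdecomp y hy
    have hyeq : y = u₀ + (y - u₀) := by abel
    rw [hyeq]
    exact Submodule.add_mem_sup hu₀ hw
  · -- |W| • u ∈ ℤ-span
    intro β hβ u w hu hw hβuw
    have hwinf := (Submodule.mem_inf.mp hw).2
    have hw0 : ∀ a ∈ Θ, P a w = 0 := fun a ha =>
      LinearMap.mem_ker.mp ((Submodule.mem_iInf _).mp ((Submodule.mem_iInf _).mp hwinf a) ha)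
    set W := Subgroup.closure (s '' Φ) with hWdef
    by_cases hn : Nat.card ↥W = 0
    · rw [hn]
      simpa using Submodule.zero_mem (Submodule.span ℤ (coroot '' Θ))
    haveI hWfin : Finite ↥W := (Nat.card_ne_zero.mp hn).2
    have hpair_inj : ∀ x y : V', (∀ v, P v x = P v y) → x = y := by
      intro x y h
      apply P.flip.toPerfPair.injective
      ext v
      exact h v
    have htau0 : ∀ (g : V ≃ₗ[ℚ] V) (x : V') (v : V),
        P v (((P.flip.toPerfPair.trans (g.symm.dualMap)).trans P.flip.toPerfPair.symm) x)
          = P (g.symm v) x := by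
      intro g x v
      rw [LinearEquiv.trans_apply, LinearEquiv.trans_apply]
      rw [show P v (P.flip.toPerfPair.symm (g.symm.dualMap (P.flip.toPerfPair x)))
          = (g.symm.dualMap (P.flip.toPerfPair x)) v from
        P.apply_toPerfPair_flip (g.symm.dualMap (P.flip.toPerfPair x)) v]
      rw [LinearEquiv.dualMap_apply]
      rfl
    set τ : (V ≃ₗ[ℚ] V) →* (V' ≃ₗ[ℚ] V') := {
      toFun := fun g => (P.flip.toPerfPair.trans (g.symm.dualMap)).trans P.flip.toPerfPair.symm
      map_one' := by
        apply LinearEquiv.ext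
        intro x
        apply hpair_inj
        intro v
        rw [htau0]
        rfl
      map_mul' := by
        intro g h
        apply LinearEquiv.ext
        intro x
        apply hpair_inj
        intro v
        rw [htau0]
        have hrhs : ((((P.flip.toPerfPair.trans (g.symm.dualMap)).trans P.flip.toPerfPair.symm)) *
            (((P.flip.toPerfPair.trans (h.symm.dualMap)).trans P.flip.toPerfPair.symm))) x
            = (((P.flip.toPerfPair.trans (g.symm.dualMap)).trans P.flip.toPerfPair.symm))
              ((((P.flip.toPerfPair.trans (h.symm.dualMap)).trans P.flip.toPerfPair.symm)) x) := rfl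
        rw [hrhs, htau0, htau0]
        rfl } with hτdef
    have htau : ∀ (g : V ≃ₗ[ℚ] V) (x : V') (v : V),
        P v (τ g x) = P (g.symm v) x := fun g x v => htau0 g x v
    have hτinj : Function.Injective τ := by
      intro g h hgh
      have hsymm : g.symm = h.symm := by
        apply LinearEquiv.ext
        intro v
        apply P.toPerfPair.injective
        ext x
        show P (g.symm v) x = P (h.symm v) x
        rw [← htau g x v, ← htau h x v, hgh]
      have := congrArg LinearEquiv.symm hsymm
      simpa using this
    set WΘ := Subgroup.closure (s '' Θ) with hWΘdef
    have hWle : WΘ ≤ W := Subgroup.closure_mono (Set.image_mono hΘΦ)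
    haveI : Finite ↥WΘ := Finite.of_injective (Subgroup.inclusion hWle)
      (Subgroup.inclusion_injective hWle)
    set W' := WΘ.map τ with hW'def
    haveI : Finite ↥W' := Finite.of_equiv _ (WΘ.equivMapOfInjective τ hτinj).toEquiv
    haveI : Fintype ↥W' := Fintype.ofFinite _
    have hkcard : Nat.card ↥W' = Nat.card ↥WΘ :=
      (Nat.card_congr (WΘ.equivMapOfInjective τ hτinj).toEquiv).symm
    have hdvd : Nat.card ↥W' ∣ Nat.card ↥W := hkcard ▸ Subgroup.card_dvd_of_le hWle
    have hσ : ∀ a ∈ Θ, ∀ x : V', τ (s a) x = x - (P a x) • coroot a := by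
      intro a ha x
      apply hpair_inj
      intro v
      rw [htau]
      have hsymm_sa : (s a).symm v = s a v := by
        rw [LinearEquiv.symm_apply_eq]
        exact (s_invol P Φ coroot s h2 hs_def (hΘΦ ha) v).symm
      rw [hsymm_sa, hs_def a (hΘΦ ha)]
      simp only [map_sub, map_smul, LinearMap.sub_apply, LinearMap.smul_apply, smul_eq_mul]
      ring
    have hτs_invol : ∀ a ∈ Θ, τ (s a) * τ (s a) = 1 := by
      intro a ha
      rw [← map_mul, ← map_one τ]
      congr 1
      apply LinearEquiv.ext
      intro v
      show s a (s a v) = v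
      exact s_invol P Φ coroot s h2 hs_def (hΘΦ ha) v
    have hgen_mem : ∀ a ∈ Θ, τ (s a) ∈ W' := fun a ha =>
      Subgroup.mem_map.mpr ⟨s a, Subgroup.subset_closure ⟨a, ha, rfl⟩, rfl⟩
    have hint_L : ∀ a ∈ Θ, ∀ m ∈ Submodule.span ℤ (coroot '' Θ),
        ∃ k : ℤ, P a m = (k : ℚ) := by
      intro a ha m hm
      induction hm using Submodule.span_induction with
      | mem x hx =>
        obtain ⟨b, hb, rfl⟩ := hx
        exact hcrys b (hΘΦ hb) a (hΘΦ ha)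
      | zero => exact ⟨0, by simp⟩
      | add x y _ _ ihx ihy =>
        obtain ⟨k1, hk1⟩ := ihx
        obtain ⟨k2, hk2⟩ := ihy
        exact ⟨k1 + k2, by rw [map_add, hk1, hk2]; push_cast; ring⟩
      | smul z x _ ihx =>
        obtain ⟨k1, hk1⟩ := ihx
        refine ⟨z * k1, ?_⟩
        rw [map_zsmul, hk1]
        push_cast [zsmul_eq_mul]
        ring
    have hint_u : ∀ a ∈ Θ, ∃ m : ℤ, P a u = (m : ℚ) := by
      intro a ha
      obtain ⟨m, hm⟩ := hcrys β hβ a (hΘΦ ha)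
      refine ⟨m, ?_⟩
      have hthis := congrArg (P a) hβuw
      rw [map_add, hw0 a ha, add_zero] at hthis
      rw [← hthis]
      exact hm
    have hmain : ∀ g ∈ W', ∀ v : V',
        (v - u ∈ Submodule.span ℤ (coroot '' Θ) → g v - u ∈ Submodule.span ℤ (coroot '' Θ)) ∧
        (v - u ∈ Submodule.span ℤ (coroot '' Θ) → g⁻¹ v - u ∈ Submodule.span ℤ (coroot '' Θ)) := by
      have hW'eq : W' = Subgroup.closure (τ '' (s '' Θ)) := MonoidHom.map_closure τ _
      intro g hg
      rw [hW'eq] at hg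
      induction hg using Subgroup.closure_induction with
      | mem g hgen =>
        obtain ⟨_, ⟨a, ha, rfl⟩, rfl⟩ := hgen
        have hginv : (τ (s a))⁻¹ = τ (s a) := inv_eq_of_mul_eq_one_right (hτs_invol a ha)
        have hstep : ∀ v, v - u ∈ Submodule.span ℤ (coroot '' Θ) →
            τ (s a) v - u ∈ Submodule.span ℤ (coroot '' Θ) := by
          intro v hv
          obtain ⟨k1, hk1⟩ := hint_L a ha (v - u) hv
          obtain ⟨k2, hk2⟩ := hint_u a ha
          have hav : P a v = ((k1 + k2 : ℤ) : ℚ) := by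
            have : P a v = P a (v - u) + P a u := by
              rw [map_sub]; ring
            rw [this, hk1, hk2]
            push_cast
            ring
          rw [hσ a ha v]
          have heq : v - (P a v) • coroot a - u = (v - u) - (P a v) • coroot a := by
            abel
          rw [heq, hav, Int.cast_smul_eq_zsmul]
          exact Submodule.sub_mem _ hv
            (Submodule.smul_mem _ _ (Submodule.subset_span ⟨a, ha, rfl⟩))
        exact fun v => ⟨hstep v, fun hv => by rw [hginv]; exact hstep v hv⟩
      | one =>
        intro v
        constructor <;> intro hv <;> simpa using hv
      | mul g h hgmem hhmem ihg ihh =>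
        intro v
        constructor
        · intro hv
          have h1 := (ihh v).1 hv
          have h2' := (ihg (h v)).1 h1
          exact h2'
        · intro hv
          have h1 := (ihg v).2 hv
          have h2' := (ihh (g⁻¹ v)).2 h1
          rw [mul_inv_rev]
          exact h2'
      | inv g hgmem ihg =>
        intro v
        refine ⟨(ihg v).2, fun hv => ?_⟩
        rw [inv_inv]
        exact (ihg v).1 hv
    set x : V' := ∑ g : ↥W', (g : V' ≃ₗ[ℚ] V') u with hxdef
    have hgu : ∀ g : ↥W', (g : V' ≃ₗ[ℚ] V') u - u ∈ Submodule.span ℤ (coroot '' Θ) :=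
      fun g => ((hmain g.1 g.2) u).1 (by rw [sub_self]; exact Submodule.zero_mem _)
    have hxk : x - (Nat.card ↥W' : ℤ) • u ∈ Submodule.span ℤ (coroot '' Θ) := by
      have hxsum : x - (Nat.card ↥W' : ℤ) • u = ∑ g : ↥W', ((g : V' ≃ₗ[ℚ] V') u - u) := by
        rw [Finset.sum_sub_distrib, Finset.sum_const, Finset.card_univ,
          Nat.card_eq_fintype_card, natCast_zsmul]
      rw [hxsum]
      exact Submodule.sum_mem _ fun g _ => hgu g
    have hτx : ∀ a ∈ Θ, P a x = 0 := by
      intro a ha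
      have hmem := hgen_mem a ha
      have hfix : τ (s a) x = x := by
        calc τ (s a) x = ∑ g : ↥W', τ (s a) ((g : V' ≃ₗ[ℚ] V') u) := map_sum _ _ _
          _ = ∑ g : ↥W', (((⟨τ (s a), hmem⟩ : ↥W') * g : ↥W') : V' ≃ₗ[ℚ] V') u :=
            Finset.sum_congr rfl fun g _ => rfl
          _ = x := Fintype.sum_bijective (fun g => (⟨τ (s a), hmem⟩ : ↥W') * g)
            (Group.mulLeft_bijective _) _ _ (fun g => rfl)
      have hthis := hσ a ha x
      rw [hfix] at hthis
      have h0 : (P a x) • coroot a = 0 := sub_eq_self.mp hthis.symm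
      have hcor : coroot a ≠ 0 := by
        intro hc
        have h22 := h2 a (hΘΦ ha)
        rw [hc, map_zero] at h22
        exact absurd h22 (by norm_num)
      rcases smul_eq_zero.mp h0 with h' | h'
      · exact h'
      · exact absurd h' hcor
    have hLle : ∀ m ∈ Submodule.span ℤ (coroot '' Θ), m ∈ Submodule.span ℚ (coroot '' Θ) := by
      intro m hm
      have hle : Submodule.span ℤ (coroot '' Θ) ≤
          Submodule.restrictScalars ℤ (Submodule.span ℚ (coroot '' Θ)) :=
        Submodule.span_le.mpr fun t ht => Submodule.subset_span ht
      exact hle hm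
    have hxspan : x ∈ Submodule.span ℚ (coroot '' Θ) := by
      refine Submodule.sum_mem _ fun g _ => ?_
      have heq : (g : V' ≃ₗ[ℚ] V') u = u + ((g : V' ≃ₗ[ℚ] V') u - u) := by abel
      rw [heq]
      exact Submodule.add_mem _ hu (hLle _ (hgu g))
    have hx0 : x = 0 := hL2 x hxspan hτx
    have hkmem : (Nat.card ↥W' : ℤ) • u ∈ Submodule.span ℤ (coroot '' Θ) := by
      rw [hx0, zero_sub] at hxk
      exact (neg_mem_iff).mp hxk
    obtain ⟨d, hd⟩ := hdvd
    rw [hd]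
    have hsm : ((Nat.card ↥W' * d : ℕ) : ℤ) • u = (d : ℤ) • ((Nat.card ↥W' : ℤ) • u) := by
      rw [← mul_smul]
      push_cast
      ring_nf
    rw [hsm]
    exact Submodule.smul_mem _ _ hkmem

end MainThm
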